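/- Let k ≥ 1 be such that k + 1 is not a power of 2, let J ⊆ ℕ be the set of binary digits of k, let r be the smallest integer ≥ 1 with r ∈ J and r − 1 ∉ J (such r exists since k + 1 is not a power of 2), and let x = ∏_{j∈J} X (j+1) ∈ R. Then (π_{2^r − 1} ⊗ id)(ψ_R(x)) = (Q^r(X 0) · ∏_{j∈J, j≠r} (X 0)^(2^j)) ⊗ ((X 1)^(2^r) · ∏_{j∈J, j≠r} X (j+1)), and this element is nonzero. (This shows 2^r − 1 ∈ S(x) for the top class x of H_*(Ratₖ; 𝔽₂).) -/

import Mathlib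

open MvPolynomial TensorProduct

/-- The field 𝔽₂. -/
abbrev F2 : Type := ZMod 2

/-- The polynomial ring `𝔽₂[X 0, X 1, X 2, …]`, used as a model both for
`H_*(∐ₖ Ratₖ; 𝔽₂) = 𝔽₂[g, g⁻¹Qg, Q(g⁻¹Qg), …]` (the "R" model, where `X 0 = g` and
`X (i+1) = Qⁱ(g⁻¹Qg)`) and for `H_*(∐ₙ Bβₙ; 𝔽₂) = 𝔽₂[g, Qg, Q²g, …]`
(the "B" model, where `X i = Qⁱg`). -/
abbrev P : Type := MvPolynomial ℕ F2

/-- Weight of the variable `X i` in the braid model `B`: `wt(Qⁱg) = 2^i`. -/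
def wB : ℕ → ℕ := fun i => 2 ^ i

/-- Dimension of the variable `X i` in the braid model `B`: `dim(Qⁱg) = 2^i - 1`. -/
def dB : ℕ → ℕ := fun i => 2 ^ i - 1

/-- Weight of the variable `X i` in the Rat model `R`: `wt(g) = 1`,
`wt(Qⁱ(g⁻¹Qg)) = 2^i`. -/
def wR : ℕ → ℕ := fun i => match i with
  | 0 => 1
  | j + 1 => 2 ^ j

/-- Dimension of the variable `X i` in the Rat model `R`: `dim(g) = 0`,
`dim(Qⁱ(g⁻¹Qg)) = 2^(i+1) - 1`. -/
def dR : ℕ → ℕ := fun i => match i with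
  | 0 => 0
  | j + 1 => 2 ^ (j + 1) - 1

/-- The weight (resp. dimension) of a monomial with exponent vector `m`: the sum,
with multiplicity, of the weights (resp. dimensions) `w i` of its variables. -/
def mwt (w : ℕ → ℕ) (m : ℕ →₀ ℕ) : ℕ := m.sum fun i e => e * w i

/-- A polynomial is homogeneous of weight (resp. dimension) `n` with respect to the
variable-weight function `w` if every monomial in its support has weight
(resp. dimension) `n`. -/
def Homog (w : ℕ → ℕ) (n : ℕ) (x : P) : Prop := ∀ m ∈ x.support, mwt w m = n

/-- The 𝔽₂-linear span of the monomials of weight `n`. -/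
noncomputable def spanWt (w : ℕ → ℕ) (n : ℕ) : Submodule F2 P :=
  Submodule.span F2 {p : P | ∃ m : ℕ →₀ ℕ, mwt w m = n ∧ p = monomial m 1}

/-- The image `N ⊗ M` inside `P ⊗ P` of two submodules `N, M ⊆ P`. -/
noncomputable def tensorSub (N M : Submodule F2 P) : Submodule F2 (P ⊗[F2] P) :=
  Submodule.span F2 {t : P ⊗[F2] P | ∃ a ∈ N, ∃ b ∈ M, t = a ⊗ₜ[F2] b}

/-- `Q` is the Araki–Kudo operation on the Rat model: the 𝔽₂-linear map with
`Q(X 0) = X 0 · X 1`, `Q(X (i+1)) = X (i+2)`, and the Cartan formula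
`Q(uv) = u²Q(v) + Q(u)v²`. -/
def IsQ (Q : P →ₗ[F2] P) : Prop :=
  Q (X 0) = X 0 * X 1 ∧ (∀ i : ℕ, Q (X (i + 1)) = X (i + 2)) ∧
    ∀ u v : P, Q (u * v) = u ^ 2 * Q v + Q u * v ^ 2

/-- `ψ` is the coproduct on the braid model `B`: the 𝔽₂-algebra map with
`ψ(g) = g ⊗ g` and `ψ(Qⁱg) = g^(2^i) ⊗ Qⁱg + Qⁱg ⊗ g^(2^i)` for `i ≥ 1`. -/
def IsPsiB (ψ : P →ₐ[F2] P ⊗[F2] P) : Prop :=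
  ψ (X 0) = X 0 ⊗ₜ[F2] X 0 ∧
    ∀ i : ℕ, 1 ≤ i →
      ψ (X i) = ((X 0) ^ (2 ^ i)) ⊗ₜ[F2] (X i) + (X i) ⊗ₜ[F2] ((X 0) ^ (2 ^ i))

/-- `ψ` is the coproduct on the Rat model `R` (with Araki–Kudo operation `Q`):
the 𝔽₂-algebra map with `ψ(g) = g ⊗ g`, `ψ(g⁻¹Qg) = g ⊗ g⁻¹Qg + g⁻¹Qg ⊗ g`, and
`ψ(Qⁱ(g⁻¹Qg)) = g^(2^i) ⊗ Qⁱ(g⁻¹Qg) + Qⁱg ⊗ (g⁻¹Qg)^(2^i) + (g⁻¹Qg)^(2^i) ⊗ Qⁱg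
+ Qⁱ(g⁻¹Qg) ⊗ g^(2^i)` for `i ≥ 1`, where `Qⁱg = Qⁱ(X 0)`. -/
def IsPsiR (Q : P →ₗ[F2] P) (ψ : P →ₐ[F2] P ⊗[F2] P) : Prop :=
  ψ (X 0) = X 0 ⊗ₜ[F2] X 0 ∧
  ψ (X 1) = X 0 ⊗ₜ[F2] X 1 + X 1 ⊗ₜ[F2] X 0 ∧
  ∀ i : ℕ, 1 ≤ i →
    ψ (X (i + 1)) =
      ((X 0) ^ (2 ^ i)) ⊗ₜ[F2] (X (i + 1))
      + ((⇑Q)^[i] (X 0)) ⊗ₜ[F2] ((X 1) ^ (2 ^ i))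
      + ((X 1) ^ (2 ^ i)) ⊗ₜ[F2] ((⇑Q)^[i] (X 0))
      + (X (i + 1)) ⊗ₜ[F2] ((X 0) ^ (2 ^ i))

/-- `π` is the family of projections: `π s` is the 𝔽₂-linear endomorphism fixing
every monomial of dimension `s` (with respect to the variable-dimension function
`dimv`) and annihilating every monomial of other dimensions. -/
def IsPi (dimv : ℕ → ℕ) (π : ℕ → P →ₗ[F2] P) : Prop :=
  ∀ (s : ℕ) (m : ℕ →₀ ℕ) (c : F2),
    π s (monomial m c) = if mwt dimv m = s then monomial m c else 0


/-! ### Auxiliary lemmas -/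

section Aux

open Finsupp

lemma mwt_zero (w : ℕ → ℕ) : mwt w 0 = 0 := by simp [mwt]

lemma mwt_add (w : ℕ → ℕ) (m₁ m₂ : ℕ →₀ ℕ) :
    mwt w (m₁ + m₂) = mwt w m₁ + mwt w m₂ := by
  classical
  unfold mwt
  rw [Finsupp.sum_add_index] <;> intros <;> simp [add_mul]

lemma mwt_single (w : ℕ → ℕ) (i e : ℕ) : mwt w (Finsupp.single i e) = e * w i := by
  unfold mwt
  rw [Finsupp.sum_single_index]
  simp

lemma homog_zero (w : ℕ → ℕ) (n : ℕ) : Homog w n (0 : P) := by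
  intro m hm
  simp at hm

lemma homog_monomial {w : ℕ → ℕ} {n : ℕ} {m : ℕ →₀ ℕ} (c : F2) (h : mwt w m = n) :
    Homog w n (monomial m c) := by
  intro m' hm'
  classical
  rw [MvPolynomial.support_monomial] at hm'
  split at hm'
  · simp at hm'
  · simp only [Finset.mem_singleton] at hm'
    subst hm'
    exact h

lemma homog_add {w : ℕ → ℕ} {n : ℕ} {p q : P} (hp : Homog w n p) (hq : Homog w n q) :
    Homog w n (p + q) := by
  intro m hm
  rcases Finset.mem_union.mp (MvPolynomial.support_add hm) with h | h
  · exact hp m h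
  · exact hq m h

lemma homog_smul {w : ℕ → ℕ} {n : ℕ} {p : P} (c : F2) (hp : Homog w n p) :
    Homog w n (c • p) := fun m hm => hp m (MvPolynomial.support_smul hm)

lemma homog_sum {w : ℕ → ℕ} {n : ℕ} {α : Type*} {s : Finset α} {f : α → P}
    (h : ∀ a ∈ s, Homog w n (f a)) : Homog w n (∑ a ∈ s, f a) := by
  classical
  induction s using Finset.induction_on with
  | empty => simpa using homog_zero w n
  | @insert _ _ hjs ih =>
    rw [Finset.sum_insert hjs]
    exact homog_add (h _ (Finset.mem_insert_self _ _))
      (ih fun a ha => h a (Finset.mem_insert_of_mem ha))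

lemma homog_mul {w : ℕ → ℕ} {d e : ℕ} {p q : P} (hp : Homog w d p) (hq : Homog w e q) :
    Homog w (d + e) (p * q) := by
  classical
  intro m hm
  have h := MvPolynomial.support_mul p q hm
  rw [Finset.mem_add] at h
  obtain ⟨m₁, hm₁, m₂, hm₂, rfl⟩ := h
  rw [mwt_add, hp m₁ hm₁, hq m₂ hm₂]

lemma homog_X (w : ℕ → ℕ) (i : ℕ) : Homog w (w i) (X i : P) := by
  intro m hm
  rw [MvPolynomial.support_X, Finset.mem_singleton] at hm
  subst hm
  rw [mwt_single, one_mul]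

lemma homog_one (w : ℕ → ℕ) : Homog w 0 (1 : P) := by
  have h := homog_monomial (w := w) (m := 0) (1 : F2) (mwt_zero w)
  rwa [MvPolynomial.monomial_zero', map_one] at h

lemma homog_pow {w : ℕ → ℕ} {d : ℕ} {p : P} (hp : Homog w d p) (n : ℕ) :
    Homog w (n * d) (p ^ n) := by
  induction n with
  | zero => simpa using homog_one w
  | succ n ih =>
    have h := homog_mul ih hp
    have e : (n + 1) * d = n * d + d := by ring
    rw [pow_succ, e]
    exact h

lemma homog_X0_pow (n : ℕ) : Homog dR 0 ((X 0 : P) ^ n) := by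
  have h := homog_pow (homog_X dR 0) n
  have h0 : dR 0 = 0 := rfl
  rw [h0, Nat.mul_zero] at h
  exact h

lemma homog_X1_pow (n : ℕ) : Homog dR n ((X 1 : P) ^ n) := by
  have h := homog_pow (homog_X dR 1) n
  have h0 : dR 1 = 1 := rfl
  rw [h0, Nat.mul_one] at h
  exact h

lemma homog_X_succ (j : ℕ) : Homog dR (2 ^ (j + 1) - 1) (X (j + 1) : P) :=
  homog_X dR (j + 1)

/-! ### Basic consequences of the Cartan formula -/

lemma Q_one {Q : P →ₗ[F2] P} (hQ : IsQ Q) : Q 1 = 0 := by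
  have h := hQ.2.2 1 1
  rw [one_mul, one_pow, one_mul, mul_one] at h
  exact (left_eq_add.mp h)

lemma sub_single_decomp {m : ℕ →₀ ℕ} {i : ℕ} (hi : m i ≠ 0) :
    m = Finsupp.single i 1 + (m - Finsupp.single i 1) := by
  ext j
  rw [Finsupp.add_apply, Finsupp.tsub_apply, Finsupp.single_apply]
  split_ifs with h
  · subst h
    omega
  · omega

lemma monomial_decomp {m : ℕ →₀ ℕ} {i : ℕ} (hi : m i ≠ 0) :
    (monomial m (1 : F2) : P) = X i * monomial (m - Finsupp.single i 1) 1 := by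
  have hX : (X i : P) = monomial (Finsupp.single i 1) 1 := by
    rw [← MvPolynomial.X_pow_eq_monomial, pow_one]
  rw [hX, MvPolynomial.monomial_mul, one_mul, ← sub_single_decomp hi]

lemma monomial_smul_one (m : ℕ →₀ ℕ) (c : F2) :
    (monomial m c : P) = c • monomial m 1 := by
  rw [MvPolynomial.smul_monomial, smul_eq_mul, mul_one]

lemma Q_X_homog {Q : P →ₗ[F2] P} (hQ : IsQ Q) (i : ℕ) :
    Homog dR (2 * dR i + 1) (Q (X i)) := by
  match i with
  | 0 =>
    rw [hQ.1]
    have h := homog_mul (homog_X dR 0) (homog_X dR 1)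
    have : (2 * dR 0 + 1) = dR 0 + dR 1 := rfl
    rw [this]
    exact h
  | (i' + 1) =>
    rw [hQ.2.1 i']
    have h := homog_X dR (i' + 2)
    have he : dR (i' + 2) = 2 * dR (i' + 1) + 1 := by
      show 2 ^ (i' + 2) - 1 = 2 * (2 ^ (i' + 1) - 1) + 1
      have h1 : (1 : ℕ) ≤ 2 ^ (i' + 1) := Nat.one_le_two_pow
      have h2 : (2 : ℕ) ^ (i' + 2) = 2 * 2 ^ (i' + 1) := by ring
      omega
    rw [← he]
    exact h

lemma Q_monomial_homog {Q : P →ₗ[F2] P} (hQ : IsQ Q) :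
    ∀ (n : ℕ) (m : ℕ →₀ ℕ) (c : F2), (m.sum fun _ e => e) = n →
      Homog dR (2 * mwt dR m + 1) (Q (monomial m c)) := by
  intro n
  induction n using Nat.strong_induction_on with
  | _ n ih =>
    intro m c hdeg
    rw [monomial_smul_one, map_smul]
    apply homog_smul
    by_cases h0 : m = 0
    · subst h0
      rw [MvPolynomial.monomial_zero', map_one, Q_one hQ]
      exact homog_zero dR _
    · obtain ⟨i, hi⟩ : ∃ i, m i ≠ 0 := by
        by_contra h
        push_neg at h
        exact h0 (Finsupp.ext h)
      have hms := sub_single_decomp hi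
      set m' := m - Finsupp.single i 1 with hm'
      have hdim : mwt dR m = dR i + mwt dR m' := by
        conv_lhs => rw [hms]
        rw [mwt_add, mwt_single, one_mul]
      have hdeg' : (m'.sum fun _ e => e) < n := by
        have : (m.sum fun _ e => e) = 1 + (m'.sum fun _ e => e) := by
          conv_lhs => rw [hms]
          rw [Finsupp.sum_add_index (fun _ _ => rfl) (fun _ _ _ _ => rfl),
            Finsupp.sum_single_index rfl]
        omega
      have h1 := ih _ hdeg' m' 1 rfl
      rw [monomial_decomp hi, hQ.2.2]
      have t1 : Homog dR (2 * dR i + (2 * mwt dR m' + 1)) ((X i : P) ^ 2 * Q (monomial m' 1)) :=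
        homog_mul (homog_pow (homog_X dR i) 2) h1
      have t2 : Homog dR ((2 * dR i + 1) + 2 * mwt dR m')
          (Q (X i) * (monomial m' (1 : F2)) ^ 2) :=
        homog_mul (Q_X_homog hQ i) (homog_pow (homog_monomial 1 rfl) 2)
      have e1 : 2 * dR i + (2 * mwt dR m' + 1) = 2 * mwt dR m + 1 := by omega
      have e2 : (2 * dR i + 1) + 2 * mwt dR m' = 2 * mwt dR m + 1 := by omega
      rw [e1] at t1
      rw [e2] at t2
      exact homog_add t1 t2

lemma Q_homog {Q : P →ₗ[F2] P} (hQ : IsQ Q) {d : ℕ} {p : P} (hp : Homog dR d p) :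
    Homog dR (2 * d + 1) (Q p) := by
  have hrep : Q p = ∑ m ∈ p.support, Q (monomial m (MvPolynomial.coeff m p)) := by
    rw [← map_sum]
    congr 1
    exact MvPolynomial.as_sum p
  rw [hrep]
  apply homog_sum
  intro m hm
  have h := Q_monomial_homog hQ _ m (MvPolynomial.coeff m p) rfl
  rwa [hp m hm] at h

lemma Qpow_X0_homog {Q : P →ₗ[F2] P} (hQ : IsQ Q) (j : ℕ) :
    Homog dR (2 ^ j - 1) ((⇑Q)^[j] (X 0) : P) := by
  induction j with
  | zero =>
    exact homog_X dR 0
  | succ j ih =>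
    have e : (2 : ℕ) ^ (j + 1) - 1 = 2 * (2 ^ j - 1) + 1 := by
      have h1 : (1 : ℕ) ≤ 2 ^ j := Nat.one_le_two_pow
      have h2 : (2 : ℕ) ^ (j + 1) = 2 * 2 ^ j := by ring
      omega
    rw [Function.iterate_succ_apply', e]
    exact Q_homog hQ ih

/-! ### Tracking which variables occur -/

/-- Every monomial in the support of `p` uses (with nonzero exponent) some
variable with index in `S`. -/
def Uses (S : Finset ℕ) (p : P) : Prop := ∀ m ∈ p.support, ∃ i ∈ S, m i ≠ 0

lemma uses_zero (S : Finset ℕ) : Uses S (0 : P) := by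
  intro m hm
  simp at hm

lemma uses_mono {S T : Finset ℕ} {p : P} (hST : S ⊆ T) (hp : Uses S p) : Uses T p :=
  fun m hm => by
    obtain ⟨i, hi, hne⟩ := hp m hm
    exact ⟨i, hST hi, hne⟩

lemma uses_add {S : Finset ℕ} {p q : P} (hp : Uses S p) (hq : Uses S q) :
    Uses S (p + q) := by
  intro m hm
  rcases Finset.mem_union.mp (MvPolynomial.support_add hm) with h | h
  · exact hp m h
  · exact hq m h

lemma uses_smul {S : Finset ℕ} {p : P} (c : F2) (hp : Uses S p) : Uses S (c • p) :=
  fun m hm => hp m (MvPolynomial.support_smul hm)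

lemma uses_sum {S : Finset ℕ} {α : Type*} {s : Finset α} {f : α → P}
    (h : ∀ a ∈ s, Uses S (f a)) : Uses S (∑ a ∈ s, f a) := by
  classical
  induction s using Finset.induction_on with
  | empty => simpa using uses_zero S
  | @insert _ _ hjs ih =>
    rw [Finset.sum_insert hjs]
    exact uses_add (h _ (Finset.mem_insert_self _ _))
      (ih fun a ha => h a (Finset.mem_insert_of_mem ha))

lemma uses_mul_left {S : Finset ℕ} {p q : P} (hp : Uses S p) : Uses S (p * q) := by
  classical
  intro m hm
  have h := MvPolynomial.support_mul p q hm
  rw [Finset.mem_add] at h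
  obtain ⟨m₁, hm₁, m₂, hm₂, rfl⟩ := h
  obtain ⟨i, hi, hne⟩ := hp m₁ hm₁
  refine ⟨i, hi, ?_⟩
  simp only [Finsupp.add_apply]
  omega

lemma uses_mul_right {S : Finset ℕ} {p q : P} (hq : Uses S q) : Uses S (p * q) := by
  rw [mul_comm]
  exact uses_mul_left hq

lemma uses_X_pow {S : Finset ℕ} {i k : ℕ} (hi : i ∈ S) (hk : k ≠ 0) :
    Uses S ((X i : P) ^ k) := by
  intro m hm
  rw [MvPolynomial.support_X_pow, Finset.mem_singleton] at hm
  subst hm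
  exact ⟨i, hi, by simp [Finsupp.single_apply, hk]⟩

lemma uses_Q {Q : P →ₗ[F2] P} (hQ : IsQ Q) {n : ℕ} {p : P}
    (hp : Uses (Finset.Icc 1 n) p) : Uses (Finset.Icc 1 (n + 1)) (Q p) := by
  have hrep : Q p = ∑ m ∈ p.support, Q (monomial m (MvPolynomial.coeff m p)) := by
    rw [← map_sum]
    congr 1
    exact MvPolynomial.as_sum p
  rw [hrep]
  apply uses_sum
  intro m hm
  obtain ⟨i, hiS, hmi⟩ := hp m hm
  rw [Finset.mem_Icc] at hiS
  obtain ⟨i', rfl⟩ : ∃ i', i = i' + 1 := ⟨i - 1, by omega⟩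
  rw [monomial_smul_one, map_smul]
  apply uses_smul
  rw [monomial_decomp hmi, hQ.2.2, hQ.2.1 i']
  apply uses_add
  · exact uses_mul_left (uses_X_pow (Finset.mem_Icc.mpr ⟨by omega, by omega⟩) (by norm_num))
  · have := uses_X_pow (S := Finset.Icc 1 (n + 1)) (i := i' + 2) (k := 1)
      (Finset.mem_Icc.mpr ⟨by omega, by omega⟩) one_ne_zero
    rw [pow_one] at this
    exact uses_mul_left this

/-- The structure of `Qʲ⁺¹(X 0)`: it is `X0^(2^j) · X (j+1)` plus an error term all
of whose monomials use a variable `X i` with `1 ≤ i ≤ j`. -/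
lemma Qpow_X0_eq {Q : P →ₗ[F2] P} (hQ : IsQ Q) (j : ℕ) :
    ∃ E : P,
      ((⇑Q)^[j + 1] (X 0) : P)
        = monomial (Finsupp.single 0 (2 ^ j) + Finsupp.single (j + 1) 1) 1 + E
      ∧ Uses (Finset.Icc 1 j) E := by
  have hmon : ∀ (a b : ℕ),
      (monomial (Finsupp.single 0 a + Finsupp.single (b + 1) 1) (1 : F2) : P)
        = (X 0 : P) ^ a * X (b + 1) := by
    intro a b
    rw [MvPolynomial.X_pow_eq_monomial, show (X (b+1) : P) = monomial (Finsupp.single (b+1) 1) 1 by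
      rw [← MvPolynomial.X_pow_eq_monomial, pow_one], MvPolynomial.monomial_mul, one_mul]
  induction j with
  | zero =>
    refine ⟨0, ?_, uses_zero _⟩
    rw [Function.iterate_one, hQ.1, add_zero, hmon]
    norm_num
  | succ j ih =>
    obtain ⟨E, hE, hUses⟩ := ih
    refine ⟨Q ((X 0 : P) ^ (2 ^ j)) * (X (j + 1) : P) ^ 2 + Q E, ?_, ?_⟩
    · rw [Function.iterate_succ_apply', hE, map_add, hmon, hQ.2.2, hQ.2.1 j,
        hmon (2 ^ (j + 1)) (j + 1)]
      have hp2 : ((X 0 : P) ^ (2 ^ j)) ^ 2 = (X 0 : P) ^ (2 ^ (j + 1)) := by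
        rw [← pow_mul, ← pow_succ]
      have hidx : j + 1 + 1 = j + 2 := rfl
      rw [hp2, hidx]
      ring
    · apply uses_add
      · exact uses_mul_right (uses_X_pow (Finset.mem_Icc.mpr ⟨by omega, by omega⟩) (by norm_num))
      · exact uses_Q hQ hUses

/-! ### The projection on homogeneous polynomials -/

lemma pi_homog {π : ℕ → P →ₗ[F2] P} (hπ : IsPi dR π) {s d : ℕ} {a : P}
    (ha : Homog dR d a) : π s a = if d = s then a else 0 := by
  have h1 : π s a = ∑ m ∈ a.support, π s (monomial m (MvPolynomial.coeff m a)) := by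
    rw [← map_sum]
    congr 1
    exact MvPolynomial.as_sum a
  rw [h1]
  by_cases hds : d = s
  · rw [if_pos hds]
    have : ∀ m ∈ a.support, π s (monomial m (MvPolynomial.coeff m a))
        = monomial m (MvPolynomial.coeff m a) := by
      intro m hm
      rw [hπ s m _, if_pos (by rw [ha m hm, hds])]
    rw [Finset.sum_congr rfl this]
    exact (MvPolynomial.as_sum a).symm
  · rw [if_neg hds]
    apply Finset.sum_eq_zero
    intro m hm
    rw [hπ s m _, if_neg (by rw [ha m hm]; exact hds)]

/-! ### A filtration of `P ⊗ P` by left homogeneous pieces -/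

/-- The span of elementary tensors `a ⊗ b` whose left factor is homogeneous of some
dimension `d` with `lo ≤ d` and either `d ≤ n` or `2^(r+1) - 1 ≤ d`. -/
noncomputable def W (r lo n : ℕ) : Submodule F2 (P ⊗[F2] P) :=
  Submodule.span F2 {t : P ⊗[F2] P | ∃ a b : P, ∃ d : ℕ,
    Homog dR d a ∧ lo ≤ d ∧ (d ≤ n ∨ 2 ^ (r + 1) - 1 ≤ d) ∧ t = a ⊗ₜ[F2] b}

lemma W_mono {r lo lo' n n' : ℕ} (hlo : lo' ≤ lo) (hn : n ≤ n') :
    W r lo n ≤ W r lo' n' := by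
  apply Submodule.span_mono
  rintro t ⟨a, b, d, h1, h2, h3, h4⟩
  exact ⟨a, b, d, h1, le_trans hlo h2, h3.imp (fun h => le_trans h hn) id, h4⟩

lemma W_tmul_mem {r lo n d : ℕ} {a b : P} (ha : Homog dR d a) (h2 : lo ≤ d)
    (h3 : d ≤ n ∨ 2 ^ (r + 1) - 1 ≤ d) : a ⊗ₜ[F2] b ∈ W r lo n :=
  Submodule.subset_span ⟨a, b, d, ha, h2, h3, rfl⟩

lemma W_mul {r lo n lo' n' : ℕ} {t t' : P ⊗[F2] P} (ht : t ∈ W r lo n)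
    (ht' : t' ∈ W r lo' n') : t * t' ∈ W r (lo + lo') (n + n') := by
  have hmm := Submodule.mul_mem_mul ht ht'
  rw [W, W, Submodule.span_mul_span] at hmm
  refine Submodule.span_le.mpr ?_ hmm
  rintro x hx
  rw [Set.mem_mul] at hx
  obtain ⟨y, hy, z, hz, rfl⟩ := hx
  obtain ⟨a, b, d, ha, h2, h3, rfl⟩ := hy
  obtain ⟨a', b', d', ha', h2', h3', rfl⟩ := hz
  rw [Algebra.TensorProduct.tmul_mul_tmul]
  apply Submodule.subset_span
  refine ⟨a * a', b * b', d + d', homog_mul ha ha', by omega, ?_, rfl⟩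
  rcases h3 with h3 | h3
  · rcases h3' with h3' | h3'
    · exact Or.inl (Nat.add_le_add h3 h3')
    · exact Or.inr (le_trans h3' (Nat.le_add_left d' d))
  · exact Or.inr (le_trans h3 (Nat.le_add_right d d'))

/-! ### Decomposition of `ψ` on generators and products -/

lemma psi_X_decomp {Q : P →ₗ[F2] P} (hQ : IsQ Q) {ψ : P →ₐ[F2] P ⊗[F2] P}
    (hψ : IsPsiR Q ψ) {r : ℕ} (hr : 1 ≤ r) {j : ℕ} (hjr : j ≠ r) :
    ∃ e ∈ W r 1 (if j < r then 2 ^ (j + 1) - 1 else 0),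
      ψ (X (j + 1)) = ((X 0 : P) ^ (2 ^ j)) ⊗ₜ[F2] (X (j + 1) : P) + e := by
  match j with
  | 0 =>
    refine ⟨(X 1 : P) ⊗ₜ[F2] (X 0 : P), ?_, ?_⟩
    · rw [if_pos (show (0 : ℕ) < r by omega)]
      exact W_tmul_mem (d := 1) (homog_X dR 1) le_rfl (Or.inl (by norm_num))
    · rw [show (0 : ℕ) + 1 = 1 from rfl, hψ.2.1]
      norm_num
  | (j' + 1) =>
    have h1j : 1 ≤ j' + 1 := by omega
    have h2j : (2 : ℕ) ≤ 2 ^ (j' + 1) := by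
      calc (2 : ℕ) = 2 ^ 1 := by norm_num
      _ ≤ 2 ^ (j' + 1) := Nat.pow_le_pow_right (by norm_num) (by omega)
    refine ⟨((⇑Q)^[j' + 1] (X 0) : P) ⊗ₜ[F2] ((X 1 : P) ^ (2 ^ (j' + 1)))
      + ((X 1 : P) ^ (2 ^ (j' + 1))) ⊗ₜ[F2] ((⇑Q)^[j' + 1] (X 0) : P)
      + (X (j' + 1 + 1) : P) ⊗ₜ[F2] ((X 0 : P) ^ (2 ^ (j' + 1))), ?_, ?_⟩
    · have hbr : ∀ d : ℕ, 1 ≤ d → 2 ^ (j' + 1) - 1 ≤ d → d ≤ 2 ^ (j' + 1 + 1) - 1 →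
          (d ≤ (if j' + 1 < r then 2 ^ (j' + 1 + 1) - 1 else 0) ∨ 2 ^ (r + 1) - 1 ≤ d) := by
        intro d hd1 hd2 hd3
        by_cases hlt : j' + 1 < r
        · rw [if_pos hlt]
          exact Or.inl hd3
        · have hgt : r + 1 ≤ j' + 1 := by omega
          have : (2 : ℕ) ^ (r + 1) ≤ 2 ^ (j' + 1) :=
            Nat.pow_le_pow_right (by norm_num) hgt
          exact Or.inr (by omega)
      have hmem1 : ((⇑Q)^[j' + 1] (X 0) : P) ⊗ₜ[F2] ((X 1 : P) ^ (2 ^ (j' + 1)))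
          ∈ W r 1 (if j' + 1 < r then 2 ^ (j' + 1 + 1) - 1 else 0) := by
        refine W_tmul_mem (d := 2 ^ (j' + 1) - 1) (Qpow_X0_homog hQ (j' + 1)) (by omega) ?_
        refine hbr _ (by omega) le_rfl ?_
        have : (2 : ℕ) ^ (j' + 1) ≤ 2 ^ (j' + 1 + 1) :=
          Nat.pow_le_pow_right (by norm_num) (by omega)
        omega
      have hmem2 : ((X 1 : P) ^ (2 ^ (j' + 1))) ⊗ₜ[F2] ((⇑Q)^[j' + 1] (X 0) : P)
          ∈ W r 1 (if j' + 1 < r then 2 ^ (j' + 1 + 1) - 1 else 0) := by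
        refine W_tmul_mem (d := 2 ^ (j' + 1)) (homog_X1_pow _) (by omega) ?_
        refine hbr _ (by omega) (by omega) ?_
        have : 2 ^ (j' + 1 + 1) = 2 * 2 ^ (j' + 1) := by ring
        omega
      have hmem3 : (X (j' + 1 + 1) : P) ⊗ₜ[F2] ((X 0 : P) ^ (2 ^ (j' + 1)))
          ∈ W r 1 (if j' + 1 < r then 2 ^ (j' + 1 + 1) - 1 else 0) := by
        refine W_tmul_mem (d := 2 ^ (j' + 1 + 1) - 1) (homog_X_succ (j' + 1)) ?_ ?_
        · have : 2 ^ (j' + 1 + 1) = 2 * 2 ^ (j' + 1) := by ring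
          omega
        · refine hbr _ ?_ ?_ le_rfl
          · have : 2 ^ (j' + 1 + 1) = 2 * 2 ^ (j' + 1) := by ring
            omega
          · have : 2 ^ (j' + 1 + 1) = 2 * 2 ^ (j' + 1) := by ring
            omega
      exact Submodule.add_mem _ (Submodule.add_mem _ hmem1 hmem2) hmem3
    · rw [hψ.2.2 (j' + 1) h1j]
      abel

lemma prod_psi_decomp {Q : P →ₗ[F2] P} (hQ : IsQ Q) {ψ : P →ₐ[F2] P ⊗[F2] P}
    (hψ : IsPsiR Q ψ) {r : ℕ} (hr : 1 ≤ r) (K : Finset ℕ) (hrK : r ∉ K) :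
    ∃ c ∈ W r 1 (∑ j ∈ K.filter (· < r), (2 ^ (j + 1) - 1)),
      ∏ j ∈ K, ψ (X (j + 1)) =
        (∏ j ∈ K, (X 0 : P) ^ (2 ^ j)) ⊗ₜ[F2] (∏ j ∈ K, (X (j + 1) : P)) + c := by
  classical
  induction K using Finset.induction_on with
  | empty =>
    exact ⟨0, Submodule.zero_mem _, by simp [Algebra.TensorProduct.one_def]⟩
  | @insert j K hjK ih =>
    have hjr : j ≠ r := by
      rintro rfl
      exact hrK (Finset.mem_insert_self _ _)
    obtain ⟨c, hc, hprod⟩ := ih (fun h => hrK (Finset.mem_insert_of_mem h))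
    obtain ⟨e, he, hpsij⟩ := psi_X_decomp hQ hψ hr hjr
    rw [Finset.prod_insert hjK, Finset.prod_insert hjK, Finset.prod_insert hjK, hprod, hpsij]
    set A := ∏ j ∈ K, (X 0 : P) ^ (2 ^ j) with hA
    set B := ∏ j ∈ K, (X (j + 1) : P) with hB
    set n := ∑ j ∈ K.filter (· < r), (2 ^ (j + 1) - 1) with hn
    have hfilter : (∑ j' ∈ (insert j K).filter (· < r), (2 ^ (j' + 1) - 1))
        = (if j < r then 2 ^ (j + 1) - 1 else 0) + n := by
      rw [Finset.filter_insert]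
      by_cases hlt : j < r
      · rw [if_pos hlt, if_pos hlt, Finset.sum_insert (fun h => hjK (Finset.mem_filter.mp h).1)]
      · rw [if_neg hlt, if_neg hlt, zero_add]
    have hAhom : Homog dR 0 A := by
      rw [hA, Finset.prod_pow_eq_pow_sum]
      exact homog_X0_pow _
    have hABmem : A ⊗ₜ[F2] B + c ∈ W r 0 n := by
      refine Submodule.add_mem _ ?_ (W_mono (by omega) le_rfl hc)
      exact W_tmul_mem (d := 0) hAhom le_rfl (Or.inl (by omega))
    have hmain_c : (((X 0 : P) ^ (2 ^ j)) ⊗ₜ[F2] (X (j + 1) : P)) * c ∈ W r 1 n := by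
      have h0 : (((X 0 : P) ^ (2 ^ j)) ⊗ₜ[F2] (X (j + 1) : P)) ∈ W r 0 0 :=
        W_tmul_mem (d := 0) (homog_X0_pow _) le_rfl (Or.inl le_rfl)
      have := W_mul h0 hc
      simpa using this
    have he_mem : e * (A ⊗ₜ[F2] B + c)
        ∈ W r 1 ((if j < r then 2 ^ (j + 1) - 1 else 0) + n) := by
      have := W_mul he hABmem
      simpa using this
    refine ⟨(((X 0 : P) ^ (2 ^ j)) ⊗ₜ[F2] (X (j + 1) : P)) * c + e * (A ⊗ₜ[F2] B + c), ?_, ?_⟩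
    · rw [hfilter]
      refine Submodule.add_mem _ (W_mono le_rfl ?_ hmain_c) he_mem
      omega
    · have hmm : (((X 0 : P) ^ (2 ^ j)) ⊗ₜ[F2] (X (j + 1) : P)) * (A ⊗ₜ[F2] B)
          = ((X 0 : P) ^ (2 ^ j) * A) ⊗ₜ[F2] ((X (j + 1) : P) * B) :=
        Algebra.TensorProduct.tmul_mul_tmul _ _ _ _
      rw [← hmm]
      ring

/-- Anything of the form `(a ⊗ b) * t` with `a` homogeneous and `t ∈ W r 1 n` is
killed by `π s ⊗ id` provided no achievable total dimension equals `s`. -/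
lemma kill_W {π : ℕ → P →ₗ[F2] P} (hπ : IsPi dR π) {r s n d : ℕ} {a b : P}
    (ha : Homog dR d a)
    (hd : ∀ d' : ℕ, 1 ≤ d' → (d' ≤ n ∨ 2 ^ (r + 1) - 1 ≤ d') → d + d' ≠ s)
    {t : P ⊗[F2] P} (ht : t ∈ W r 1 n) :
    TensorProduct.map (π s) (LinearMap.id : P →ₗ[F2] P) ((a ⊗ₜ[F2] b) * t) = 0 := by
  have hker : W r 1 n ≤ LinearMap.ker
      ((TensorProduct.map (π s) (LinearMap.id : P →ₗ[F2] P)).comp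
        (LinearMap.mulLeft F2 (a ⊗ₜ[F2] b))) := by
    rw [W]
    apply Submodule.span_le.mpr
    rintro u ⟨a', b', d', ha', h1, h2, rfl⟩
    simp only [SetLike.mem_coe, LinearMap.mem_ker, LinearMap.coe_comp, Function.comp_apply,
      LinearMap.mulLeft_apply]
    rw [Algebra.TensorProduct.tmul_mul_tmul, TensorProduct.map_tmul,
      pi_homog hπ (homog_mul ha ha'), if_neg (hd d' h1 h2), TensorProduct.zero_tmul]
  have := hker ht
  rw [LinearMap.mem_ker, LinearMap.coe_comp, Function.comp_apply,
    LinearMap.mulLeft_apply] at this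
  exact this

lemma sum_range_pow_bound : ∀ t : ℕ, (∑ j ∈ Finset.range t, (2 ^ (j + 1) - 1)) ≤ 2 ^ (t + 1) - 2 := by
  intro t
  induction t with
  | zero => simp
  | succ t ih =>
    rw [Finset.sum_range_succ]
    have h1 : (1 : ℕ) ≤ 2 ^ (t + 1) := Nat.one_le_two_pow
    have h2 : 2 ^ (t + 1 + 1) = 2 * 2 ^ (t + 1) := by ring
    omega

lemma prod_X_monomial : ∀ K : Finset ℕ,
    (∏ j ∈ K, (X (j + 1) : P)) = monomial (∑ j ∈ K, Finsupp.single (j + 1) 1) 1 := by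
  classical
  intro K
  induction K using Finset.induction_on with
  | empty => simp
  | @insert j K hjK ih =>
    rw [Finset.prod_insert hjK, Finset.sum_insert hjK, ih,
      show (X (j + 1) : P) = monomial (Finsupp.single (j + 1) 1) 1 by
        rw [← MvPolynomial.X_pow_eq_monomial, pow_one],
      MvPolynomial.monomial_mul, one_mul]

end Aux

/-- Let `k ≥ 1` with `k + 1` not a power of `2`, let `J` be the set
of binary digits of `k`, let `r` be the smallest integer `≥ 1` with `r ∈ J` and
`r − 1 ∉ J`, and let `x = ∏_{j∈J} X (j+1) ∈ R`.  Then
`(π_{2^r−1} ⊗ id)(ψ_R(x)) = (Q^r(X 0)·∏_{j∈J,j≠r} (X 0)^(2^j)) ⊗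
((X 1)^(2^r)·∏_{j∈J,j≠r} X (j+1))`, and this element is nonzero
(so `2^r − 1 ∈ S(x)` for the top class `x` of `H_*(Ratₖ; 𝔽₂)`). -/
theorem psiR_component_nonzero (k : ℕ) (hk : 1 ≤ k)
    (hpow : ∀ m : ℕ, k + 1 ≠ 2 ^ m)
    (J : Finset ℕ) (hJ : k = ∑ j ∈ J, 2 ^ j)
    (r : ℕ) (hr : 1 ≤ r) (hrJ : r ∈ J) (hrpred : r - 1 ∉ J)
    (hmin : ∀ r' : ℕ, 1 ≤ r' → r' ∈ J → r' - 1 ∉ J → r ≤ r')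
    (Q : P →ₗ[F2] P) (hQ : IsQ Q)
    (ψ : P →ₐ[F2] P ⊗[F2] P) (hψ : IsPsiR Q ψ)
    (π : ℕ → P →ₗ[F2] P) (hπ : IsPi dR π)
    (x : P) (hx : x = ∏ j ∈ J, X (j + 1)) :
    TensorProduct.map (π (2 ^ r - 1)) (LinearMap.id : P →ₗ[F2] P) (ψ x) =
      ((⇑Q)^[r] (X 0) * ∏ j ∈ J.erase r, (X 0) ^ (2 ^ j)) ⊗ₜ[F2]
        ((X 1) ^ (2 ^ r) * ∏ j ∈ J.erase r, X (j + 1)) ∧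
    (((⇑Q)^[r] (X 0) * ∏ j ∈ J.erase r, (X 0) ^ (2 ^ j)) ⊗ₜ[F2]
        ((X 1) ^ (2 ^ r) * ∏ j ∈ J.erase r, X (j + 1)) : P ⊗[F2] P) ≠ 0 := by
  classical
  clear hk hpow hJ hmin
  have h2r : (2 : ℕ) ≤ 2 ^ r := by
    calc (2 : ℕ) = 2 ^ 1 := by norm_num
    _ ≤ 2 ^ r := Nat.pow_le_pow_right (by norm_num) hr
  have h2r1 : (2 : ℕ) ^ (r + 1) = 2 * 2 ^ r := by ring
  set K := J.erase r with hK
  have hrK : r ∉ K := Finset.notMem_erase r J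
  obtain ⟨c, hc, hprod⟩ := prod_psi_decomp hQ hψ hr K hrK
  set A := ∏ j ∈ K, (X 0 : P) ^ (2 ^ j) with hA
  set B := ∏ j ∈ K, (X (j + 1) : P) with hB
  have hsub : K.filter (· < r) ⊆ Finset.range (r - 1) := by
    intro j hj
    rw [Finset.mem_filter] at hj
    obtain ⟨hjK, hjlt⟩ := hj
    rw [hK, Finset.mem_erase] at hjK
    have hne : j ≠ r - 1 := by
      rintro rfl
      exact hrpred hjK.2
    rw [Finset.mem_range]
    omega
  have hnbound : (∑ j ∈ K.filter (· < r), (2 ^ (j + 1) - 1)) ≤ 2 ^ r - 2 := by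
    calc (∑ j ∈ K.filter (· < r), (2 ^ (j + 1) - 1))
        ≤ ∑ j ∈ Finset.range (r - 1), (2 ^ (j + 1) - 1) :=
          Finset.sum_le_sum_of_subset hsub
    _ ≤ 2 ^ (r - 1 + 1) - 2 := sum_range_pow_bound _
    _ = 2 ^ r - 2 := by congr 2; omega
  have hc' : c ∈ W r 1 (2 ^ r - 2) := W_mono le_rfl hnbound hc
  have hψx : ψ x = ψ (X (r + 1)) * (A ⊗ₜ[F2] B + c) := by
    rw [hx, map_prod, ← Finset.mul_prod_erase J _ hrJ, ← hK, hprod]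
  have hAhom : Homog dR 0 A := by
    rw [hA, Finset.prod_pow_eq_pow_sum]
    exact homog_X0_pow _
  have hQr : Homog dR (2 ^ r - 1) ((⇑Q)^[r] (X 0) : P) := Qpow_X0_homog hQ r
  have h1 : Homog dR 0 ((X 0 : P) ^ (2 ^ r)) := homog_X0_pow _
  have h3 : Homog dR (2 ^ r) ((X 1 : P) ^ (2 ^ r)) := homog_X1_pow _
  have h4 : Homog dR (2 ^ (r + 1) - 1) (X (r + 1) : P) := homog_X_succ r
  -- the four projections of the main terms
  have hp1 : π (2 ^ r - 1) ((X 0 : P) ^ (2 ^ r) * A) = 0 := by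
    have h := pi_homog (s := 2 ^ r - 1) hπ (homog_mul h1 hAhom)
    rwa [if_neg (by omega)] at h
  have hp2 : π (2 ^ r - 1) ((⇑Q)^[r] (X 0) * A) = (⇑Q)^[r] (X 0) * A := by
    have h := pi_homog (s := 2 ^ r - 1) hπ (homog_mul hQr hAhom)
    rwa [if_pos (by omega)] at h
  have hp3 : π (2 ^ r - 1) ((X 1 : P) ^ (2 ^ r) * A) = 0 := by
    have h := pi_homog (s := 2 ^ r - 1) hπ (homog_mul h3 hAhom)
    rwa [if_neg (by omega)] at h
  have hp4 : π (2 ^ r - 1) ((X (r + 1) : P) * A) = 0 := by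
    have h := pi_homog (s := 2 ^ r - 1) hπ (homog_mul h4 hAhom)
    rwa [if_neg (by omega)] at h
  -- the four killed cross terms
  have k1 : TensorProduct.map (π (2 ^ r - 1)) (LinearMap.id : P →ₗ[F2] P)
      ((((X 0 : P) ^ (2 ^ r)) ⊗ₜ[F2] (X (r + 1) : P)) * c) = 0 :=
    kill_W hπ h1 (fun d' hd1 hd2 => by omega) hc'
  have k2 : TensorProduct.map (π (2 ^ r - 1)) (LinearMap.id : P →ₗ[F2] P)
      ((((⇑Q)^[r] (X 0) : P)) ⊗ₜ[F2] ((X 1 : P) ^ (2 ^ r)) * c) = 0 :=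
    kill_W hπ hQr (fun d' hd1 hd2 => by omega) hc'
  have k3 : TensorProduct.map (π (2 ^ r - 1)) (LinearMap.id : P →ₗ[F2] P)
      ((((X 1 : P) ^ (2 ^ r)) ⊗ₜ[F2] ((⇑Q)^[r] (X 0) : P)) * c) = 0 :=
    kill_W hπ h3 (fun d' hd1 hd2 => by omega) hc'
  have k4 : TensorProduct.map (π (2 ^ r - 1)) (LinearMap.id : P →ₗ[F2] P)
      (((X (r + 1) : P) ⊗ₜ[F2] ((X 0 : P) ^ (2 ^ r))) * c) = 0 :=
    kill_W hπ h4 (fun d' hd1 hd2 => by omega) hc'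
  have hmap : TensorProduct.map (π (2 ^ r - 1)) (LinearMap.id : P →ₗ[F2] P) (ψ x) =
      ((⇑Q)^[r] (X 0) * A) ⊗ₜ[F2] ((X 1 : P) ^ (2 ^ r) * B) := by
    rw [hψx, hψ.2.2 r hr, add_mul, add_mul, add_mul, mul_add, mul_add, mul_add, mul_add]
    simp only [map_add, Algebra.TensorProduct.tmul_mul_tmul, TensorProduct.map_tmul,
      LinearMap.id_coe, id_eq]
    rw [hp1, hp2, hp3, hp4, k1, k2, k3, k4]
    simp only [TensorProduct.zero_tmul, add_zero, zero_add]
  refine ⟨hmap, ?_⟩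
  -- nonvanishing
  intro h0
  obtain ⟨r', rfl⟩ : ∃ r', r = r' + 1 := ⟨r - 1, by omega⟩
  obtain ⟨E, hE, hUses⟩ := Qpow_X0_eq hQ r'
  set cK := ∑ j ∈ K, 2 ^ j with hcK
  have hAX : A = (X 0 : P) ^ cK := by rw [hA, Finset.prod_pow_eq_pow_sum]
  set Ma := (Finsupp.single 0 (2 ^ r') + Finsupp.single (r' + 1) 1) + Finsupp.single 0 cK
    with hMa
  have hamon : ((⇑Q)^[r' + 1] (X 0) : P) * A = monomial Ma 1 + E * (X 0 : P) ^ cK := by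
    rw [hAX, hE, add_mul, MvPolynomial.X_pow_eq_monomial, MvPolynomial.monomial_mul, one_mul]
  have hcoeffa : MvPolynomial.coeff Ma (((⇑Q)^[r' + 1] (X 0) : P) * A) = 1 := by
    rw [hamon, MvPolynomial.coeff_add, MvPolynomial.coeff_monomial, if_pos rfl]
    have hzero : MvPolynomial.coeff Ma (E * (X 0 : P) ^ cK) = 0 := by
      by_contra hne
      obtain ⟨i, hiIcc, hMai⟩ :=
        uses_mul_left hUses Ma (MvPolynomial.mem_support_iff.mpr hne)
      rw [Finset.mem_Icc] at hiIcc
      apply hMai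
      rw [hMa]
      simp only [Finsupp.add_apply, Finsupp.single_apply]
      split_ifs <;> omega
    rw [hzero, add_zero]
  set Mb := Finsupp.single 1 (2 ^ (r' + 1)) + ∑ j ∈ K, Finsupp.single (j + 1) 1 with hMb
  have hbmon : ((X 1 : P) ^ (2 ^ (r' + 1))) * B = monomial Mb 1 := by
    rw [hB, prod_X_monomial, MvPolynomial.X_pow_eq_monomial, MvPolynomial.monomial_mul, one_mul]
  have hcoeffb : MvPolynomial.coeff Mb (((X 1 : P) ^ (2 ^ (r' + 1))) * B) = 1 := by
    rw [hbmon, MvPolynomial.coeff_monomial, if_pos rfl]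
  have hpair := congrArg (fun t : P ⊗[F2] P =>
    (TensorProduct.lid F2 F2)
      (TensorProduct.map (MvPolynomial.lcoeff F2 Ma) (MvPolynomial.lcoeff F2 Mb) t)) h0
  simp only [TensorProduct.map_tmul, MvPolynomial.lcoeff_apply, map_zero,
    TensorProduct.lid_tmul] at hpair
  rw [hcoeffa, hcoeffb] at hpair
  simp at hpair
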